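/- Let V be a finite type and Q : Matrix V V ℕ. The following are equivalent: (i) there exists a permutation μ of V with P_μ * Q = Q * P_μ and Qᵀ = P_μ * Q (i.e., the opposite quiver Q^op is the twist of Q by an automorphism μ of Q); (ii) there exist a symmetric matrix H : Matrix (V ⊕ V) (V ⊕ V) ℕ (Hᵀ = H) and a permutation τ of V ⊕ V with P_τ * H = H * P_τ, such that Matrix.fromBlocks Q 0 0 Q = P_τ * H (i.e., the disjoint union Q ∪ Q is the twist of a graph by an automorphism, so that Q is a pretzelization of a graph). -/

import Mathlib

open Matrix

/-- The permutation matrix of a permutation `σ`: `(P_σ) i j = 1` if `j = σ i`, else `0`. -/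
def permMat {V : Type*} [DecidableEq V] (R : Type*) [Zero R] [One R]
    (σ : Equiv.Perm V) : Matrix V V R :=
  Matrix.of fun i j => if j = σ i then 1 else 0

theorem Equiv.Perm.apply_inv_self {α : Type*} (f : Equiv.Perm α) (x : α) : f (f⁻¹ x) = x :=
  Equiv.apply_symm_apply f x

theorem Equiv.Perm.inv_apply_self {α : Type*} (f : Equiv.Perm α) (x : α) : f⁻¹ (f x) = x :=
  Equiv.symm_apply_apply f x

theorem permMat_mul_apply {V : Type*} [Fintype V] [DecidableEq V]
    (σ : Equiv.Perm V) (M : Matrix V V ℕ) (i j : V) :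
    (permMat ℕ σ * M) i j = M (σ i) j := by
  simp [Matrix.mul_apply, permMat, ite_mul]

theorem mul_permMat_apply {V : Type*} [Fintype V] [DecidableEq V]
    (σ : Equiv.Perm V) (M : Matrix V V ℕ) (i j : V) :
    (M * permMat ℕ σ) i j = M i (σ⁻¹ j) := by
  simp only [Matrix.mul_apply, permMat, Matrix.of_apply, mul_ite, mul_one, mul_zero]
  have : ∀ x : V, (j = σ x) = (x = σ⁻¹ j) := by
    intro x
    apply propext; constructor <;> rintro rfl <;> simp
  simp only [this]
  simp

/-- A quiver `Q` satisfies `Q^op = ^μQ` for some automorphism `μ` of `Q` if and only if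
the disjoint union `Q ∪ Q` is a twist of a graph (symmetric quiver) by an automorphism,
i.e. `Q` is a pretzelization of a graph. -/
theorem pretzelization_iff_twist_of_opposite
    {V : Type*} [Fintype V] [DecidableEq V] (Q : Matrix V V ℕ) :
    (∃ μ : Equiv.Perm V, permMat ℕ μ * Q = Q * permMat ℕ μ ∧ Qᵀ = permMat ℕ μ * Q) ↔
      (∃ (H : Matrix (V ⊕ V) (V ⊕ V) ℕ) (τ : Equiv.Perm (V ⊕ V)),
        Hᵀ = H ∧ permMat ℕ τ * H = H * permMat ℕ τ ∧
        Matrix.fromBlocks Q 0 0 Q = permMat ℕ τ * H) := by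
  constructor
  · rintro ⟨μ, -, ht⟩
    have hQ : ∀ a b, Q b a = Q (μ a) b := by
      intro a b
      have := congrFun (congrFun ht a) b
      rwa [Matrix.transpose_apply, permMat_mul_apply] at this
    have hQ' : ∀ a b, Q b (μ⁻¹ a) = Q a b := fun a b => by
      rw [hQ (μ⁻¹ a) b, Equiv.Perm.apply_inv_self]
    let τ : Equiv.Perm (V ⊕ V) :=
      ⟨Sum.elim (Sum.inr ∘ ⇑μ⁻¹) Sum.inl, Sum.elim Sum.inr (Sum.inl ∘ ⇑μ),
        by rintro (v | v) <;> simp, by rintro (v | v) <;> simp⟩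
    have hτ1 : ∀ a, τ (Sum.inl a) = Sum.inr (μ⁻¹ a) := fun a => rfl
    have hτ2 : ∀ a, τ (Sum.inr a) = Sum.inl a := fun a => rfl
    have hτ3 : ∀ a, τ⁻¹ (Sum.inl a) = Sum.inr a := fun a => rfl
    have hτ4 : ∀ a, τ⁻¹ (Sum.inr a) = Sum.inl (μ a) := fun a => rfl
    have hPH : permMat ℕ τ * Matrix.fromBlocks 0 Q Qᵀ 0 = Matrix.fromBlocks Q 0 0 Q := by
      ext x y
      rw [permMat_mul_apply]
      rcases x with a | a <;> rcases y with b | b <;>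
        simp only [hτ1, hτ2, Matrix.fromBlocks_apply₁₁, Matrix.fromBlocks_apply₁₂,
          Matrix.fromBlocks_apply₂₁, Matrix.fromBlocks_apply₂₂, Matrix.transpose_apply,
          Matrix.zero_apply]
      exact hQ' a b
    have hHP : Matrix.fromBlocks 0 Q Qᵀ 0 * permMat ℕ τ = Matrix.fromBlocks Q 0 0 Q := by
      ext x y
      rw [mul_permMat_apply]
      rcases x with a | a <;> rcases y with b | b <;>
        simp only [hτ3, hτ4, Matrix.fromBlocks_apply₁₁, Matrix.fromBlocks_apply₁₂,
          Matrix.fromBlocks_apply₂₁, Matrix.fromBlocks_apply₂₂, Matrix.transpose_apply,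
          Matrix.zero_apply]
      exact (hQ b a).symm
    exact ⟨Matrix.fromBlocks 0 Q Qᵀ 0, τ,
      by simp [Matrix.fromBlocks_transpose], by rw [hPH, hHP], hPH.symm⟩
  · rintro ⟨H, τ, hsym, hcomm, hD⟩
    set D := Matrix.fromBlocks Q 0 0 Q with hDdef
    have hDe : ∀ i j, D i j = H (τ i) j := by
      intro i j
      rw [hD, permMat_mul_apply]
    have hH : ∀ x j, H x j = D (τ⁻¹ x) j := by
      intro x j
      rw [hDe (τ⁻¹ x) j, Equiv.Perm.apply_inv_self]
    have hs : ∀ i j, D (τ⁻¹ i) j = D (τ⁻¹ j) i := by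
      intro i j
      have := congrFun (congrFun hsym i) j
      rw [Matrix.transpose_apply, hH, hH] at this
      exact this.symm
    have ha : ∀ i j, D i j = D (τ⁻¹ i) (τ⁻¹ j) := by
      intro i j
      have := congrFun (congrFun hcomm i) j
      rwa [permMat_mul_apply, mul_permMat_apply, hH, hH, Equiv.Perm.inv_apply_self] at this
    set σ : Equiv.Perm (V ⊕ V) := τ⁻¹ * τ⁻¹ with hσ
    have hkey : ∀ i j, D (σ i) j = D j i := by
      intro i j
      rw [hσ, Equiv.Perm.mul_apply, hs (τ⁻¹ i) j, ← ha j i]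
    have good : ∀ a c, σ (Sum.inl a) = Sum.inl c → ∀ b, Q c b = Q b a := by
      intro a c h b
      have := hkey (Sum.inl a) (Sum.inl b)
      rwa [h, hDdef, Matrix.fromBlocks_apply₁₁, Matrix.fromBlocks_apply₁₁] at this
    have colzero : ∀ a c, σ (Sum.inl a) = Sum.inr c → ∀ b, Q b a = 0 := by
      intro a c h b
      have := hkey (Sum.inl a) (Sum.inl b)
      rw [h, hDdef, Matrix.fromBlocks_apply₂₁, Matrix.fromBlocks_apply₁₁] at this
      simpa using this.symm
    have rowzero : ∀ c d, σ⁻¹ (Sum.inl c) = Sum.inr d → ∀ b, Q c b = 0 := by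
      intro c d h b
      have h' : σ (Sum.inr d) = Sum.inl c := by
        rw [← h, Equiv.Perm.apply_inv_self]
      have := hkey (Sum.inr d) (Sum.inl b)
      rw [h', hDdef, Matrix.fromBlocks_apply₁₁, Matrix.fromBlocks_apply₁₂] at this
      simpa using this
    have Egood : {a : V // (σ (Sum.inl a)).isLeft} ≃ {c : V // (σ⁻¹ (Sum.inl c)).isLeft} := by
      refine ⟨fun x => ⟨(σ (Sum.inl x.1)).getLeft x.2, ?_⟩,
        fun y => ⟨(σ⁻¹ (Sum.inl y.1)).getLeft y.2, ?_⟩, ?_, ?_⟩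
      · rw [Sum.inl_getLeft, Equiv.Perm.inv_apply_self]; rfl
      · rw [Sum.inl_getLeft, Equiv.Perm.apply_inv_self]; rfl
      · rintro ⟨a, h⟩
        apply Subtype.ext
        apply Sum.inl_injective
        rw [Sum.inl_getLeft, Sum.inl_getLeft, Equiv.Perm.inv_apply_self]
      · rintro ⟨c, h⟩
        apply Subtype.ext
        apply Sum.inl_injective
        rw [Sum.inl_getLeft, Sum.inl_getLeft, Equiv.Perm.apply_inv_self]
    have cardEq : Fintype.card {a : V // ¬ (σ (Sum.inl a)).isLeft}
        = Fintype.card {c : V // ¬ (σ⁻¹ (Sum.inl c)).isLeft} := by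
      rw [Fintype.card_subtype_compl, Fintype.card_subtype_compl, Fintype.card_congr Egood]
    have e := Fintype.equivOfCardEq cardEq
    set μf : V → V := fun a =>
      if h : (σ (Sum.inl a)).isLeft then (σ (Sum.inl a)).getLeft h else (e ⟨a, h⟩).1 with hμfdef
    have hbadtarget : ∀ (a : V) (h : ¬ (σ (Sum.inl a)).isLeft) (b : V),
        Q ((e ⟨a, h⟩ : {c : V // ¬ (σ⁻¹ (Sum.inl c)).isLeft}) : V) b = 0 := by
      intro a h b
      obtain ⟨c, hc⟩ := e ⟨a, h⟩
      obtain ⟨x, hx⟩ := Sum.isRight_iff.mp (Sum.not_isLeft.mp hc)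
      exact rowzero c x hx b
    have hμf : ∀ a b, Q b a = Q (μf a) b := by
      intro a b
      rw [hμfdef]
      by_cases h : (σ (Sum.inl a)).isLeft
      · simp only [dif_pos h]
        obtain ⟨c, hx⟩ := Sum.isLeft_iff.mp h
        have hg : (σ (Sum.inl a)).getLeft h = c := by
          apply Sum.inl_injective; rw [Sum.inl_getLeft, hx]
        rw [hg]
        exact (good a c hx b).symm
      · simp only [dif_neg h]
        obtain ⟨c, hx⟩ := Sum.isRight_iff.mp (Sum.not_isLeft.mp h)
        rw [colzero a c hx b, hbadtarget a h b]
    have hinj : Function.Injective μf := by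
      intro a₁ a₂ hEq
      rw [hμfdef] at hEq
      simp only at hEq
      by_cases h₁ : (σ (Sum.inl a₁)).isLeft <;> by_cases h₂ : (σ (Sum.inl a₂)).isLeft
      · rw [dif_pos h₁, dif_pos h₂] at hEq
        have : σ (Sum.inl a₁) = σ (Sum.inl a₂) := by
          rw [← Sum.inl_getLeft _ h₁, ← Sum.inl_getLeft _ h₂, hEq]
        simpa using σ.injective this
      · rw [dif_pos h₁, dif_neg h₂] at hEq
        exfalso
        have hgood : (σ⁻¹ (Sum.inl ((σ (Sum.inl a₁)).getLeft h₁))).isLeft := by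
          rw [Sum.inl_getLeft, Equiv.Perm.inv_apply_self]; rfl
        rw [hEq] at hgood
        exact (e ⟨a₂, h₂⟩).2 hgood
      · rw [dif_neg h₁, dif_pos h₂] at hEq
        exfalso
        have hgood : (σ⁻¹ (Sum.inl ((σ (Sum.inl a₂)).getLeft h₂))).isLeft := by
          rw [Sum.inl_getLeft, Equiv.Perm.inv_apply_self]; rfl
        rw [← hEq] at hgood
        exact (e ⟨a₁, h₁⟩).2 hgood
      · rw [dif_neg h₁, dif_neg h₂] at hEq
        exact congrArg Subtype.val (e.injective (Subtype.ext hEq))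
    let μ : Equiv.Perm V := Equiv.ofBijective μf (Finite.injective_iff_bijective.mp hinj)
    have hμapp : ∀ a, μ a = μf a := fun _ => rfl
    have hQrel : ∀ a b, Q b a = Q (μ a) b := by
      intro a b; rw [hμapp]; exact hμf a b
    refine ⟨μ, ?_, ?_⟩
    · ext a b
      rw [permMat_mul_apply, mul_permMat_apply, ← hQrel a b]
      have := hQrel (μ⁻¹ b) a
      rw [Equiv.Perm.apply_inv_self] at this
      exact this.symm
    · ext a b
      rw [Matrix.transpose_apply, permMat_mul_apply]
      exact hQrel a b
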